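/- Let α be a partial action of a topological group G on a topological space X, and let X̃ = (G × X)/∼ with quotient map q, where (r,x) ∼ (s,y) iff x ∈ X_{r⁻¹s} and α_{s⁻¹r}(x) = y. Then the prescription α̃_s(q(t,x)) = q(st,x) is well defined (it does not depend on the chosen representative of the class q(t,x)) and yields a continuous action α̃ : G × X̃ → X̃ of G on X̃, i.e. α̃ is jointly continuous, α̃_e = id, and α̃_s ∘ α̃_t = α̃_{st} for all s,t ∈ G. -/

import Mathlib

structure TopPartialAction (G : Type*) (X : Type*) [Group G] [TopologicalSpace G]
    [IsTopologicalGroup G] [TopologicalSpace X] where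
  dom : G → Set X
  act : G → X → X
  isOpen_dom : ∀ t, IsOpen (dom t)
  bijOn : ∀ t, Set.BijOn (act t) (dom t⁻¹) (dom t)
  isOpen_graph : IsOpen {p : G × X | p.2 ∈ dom p.1⁻¹}
  continuousOn : ContinuousOn (fun p : G × X => act p.1 p.2) {p : G × X | p.2 ∈ dom p.1⁻¹}
  dom_one : dom 1 = Set.univ
  act_one : ∀ x, act 1 x = x
  act_comp : ∀ s t x, x ∈ dom t⁻¹ → act t x ∈ dom s⁻¹ →
    x ∈ dom (s * t)⁻¹ ∧ act (s * t) x = act s (act t x)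

def TopPartialAction.rel {G X : Type*} [Group G] [TopologicalSpace G] [IsTopologicalGroup G]
    [TopologicalSpace X] (α : TopPartialAction G X) (p q : G × X) : Prop :=
  p.2 ∈ α.dom (p.1⁻¹ * q.1) ∧ α.act (q.1⁻¹ * p.1) p.2 = q.2

namespace TopPartialAction

variable {G X : Type*} [Group G] [TopologicalSpace G] [IsTopologicalGroup G]
  [TopologicalSpace X] (α : TopPartialAction G X)

lemma rel_refl (p : G × X) : α.rel p p :=
  ⟨by simp [α.dom_one], by simp [α.act_one]⟩

lemma rel_symm {p q : G × X} (h : α.rel p q) : α.rel q p := by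
  obtain ⟨h1, h2⟩ := h
  have hmem : p.2 ∈ α.dom ((q.1⁻¹ * p.1)⁻¹) := by simpa [mul_inv_rev] using h1
  have hq : α.act (q.1⁻¹ * p.1) p.2 ∈ α.dom (q.1⁻¹ * p.1) := (α.bijOn _).mapsTo hmem
  refine ⟨by rw [← h2]; exact hq, ?_⟩
  have hc := α.act_comp (p.1⁻¹ * q.1) (q.1⁻¹ * p.1) p.2 hmem (by simpa [mul_inv_rev] using hq)
  rw [← h2, ← hc.2]
  have h1' : p.1⁻¹ * q.1 * (q.1⁻¹ * p.1) = 1 := by group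
  rw [h1', α.act_one]

lemma rel_trans {p q r : G × X} (h1 : α.rel p q) (h2 : α.rel q r) : α.rel p r := by
  obtain ⟨ha, hb⟩ := h1
  obtain ⟨hc, hd⟩ := h2
  have hm1 : p.2 ∈ α.dom ((q.1⁻¹ * p.1)⁻¹) := by simpa [mul_inv_rev] using ha
  have hm2 : α.act (q.1⁻¹ * p.1) p.2 ∈ α.dom ((r.1⁻¹ * q.1)⁻¹) := by
    rw [hb]; simpa [mul_inv_rev] using hc
  have hcomp := α.act_comp (r.1⁻¹ * q.1) (q.1⁻¹ * p.1) p.2 hm1 hm2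
  have he : r.1⁻¹ * q.1 * (q.1⁻¹ * p.1) = r.1⁻¹ * p.1 := by group
  constructor
  · have := hcomp.1
    rw [he] at this
    simpa [mul_inv_rev] using this
  · have := hcomp.2
    rw [he, hb, hd] at this
    exact this

lemma rel_equivalence : Equivalence α.rel :=
  ⟨α.rel_refl, α.rel_symm, α.rel_trans⟩

lemma isOpenMap_mk : IsOpenMap (Quot.mk α.rel) := by
  intro U hU
  have key : Quot.mk α.rel ⁻¹' (Quot.mk α.rel '' U) =
      ⋃ t : G, {q : G × X | q.2 ∈ α.dom (q.1⁻¹ * t) ∧ (t, α.act (t⁻¹ * q.1) q.2) ∈ U} := by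
    ext q
    simp only [Set.mem_preimage, Set.mem_image, Set.mem_iUnion, Set.mem_setOf_eq]
    constructor
    · rintro ⟨p, hp, hpq⟩
      have hrel : α.rel p q := (α.rel_equivalence.eqvGen_iff).1 (Quot.eq.1 hpq)
      have hsym := α.rel_symm hrel
      refine ⟨p.1, hsym.1, ?_⟩
      rw [hsym.2]
      simpa using hp
    · rintro ⟨t, hmem, hU'⟩
      have hrel : α.rel q (t, α.act (t⁻¹ * q.1) q.2) := ⟨hmem, rfl⟩
      exact ⟨_, hU', Quot.sound (α.rel_symm hrel)⟩
  have hopen : ∀ t : G, IsOpen {q : G × X | q.2 ∈ α.dom (q.1⁻¹ * t) ∧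
      (t, α.act (t⁻¹ * q.1) q.2) ∈ U} := by
    intro t
    have hf : Continuous (fun q : G × X => ((t⁻¹ * q.1, q.2) : G × X)) := by fun_prop
    have hWeq : (fun q : G × X => ((t⁻¹ * q.1, q.2) : G × X)) ⁻¹'
        {p : G × X | p.2 ∈ α.dom p.1⁻¹} = {q : G × X | q.2 ∈ α.dom (q.1⁻¹ * t)} := by
      ext q; simp [mul_inv_rev]
    have hW : IsOpen {q : G × X | q.2 ∈ α.dom (q.1⁻¹ * t)} := by
      rw [← hWeq]; exact α.isOpen_graph.preimage hf
    have hcont : ContinuousOn (fun q : G × X => α.act (t⁻¹ * q.1) q.2)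
        {q : G × X | q.2 ∈ α.dom (q.1⁻¹ * t)} := by
      have h := α.continuousOn.comp hf.continuousOn
        (Set.mapsTo_preimage _ {p : G × X | p.2 ∈ α.dom p.1⁻¹})
      rw [hWeq] at h
      exact h
    have hslice : IsOpen {z : X | (t, z) ∈ U} := hU.preimage (Continuous.prodMk_right t)
    have := hcont.isOpen_inter_preimage hW hslice
    exact this
  rw [← (isQuotientMap_quot_mk).isOpen_preimage, key]
  exact isOpen_iUnion hopen

end TopPartialAction

theorem TopPartialAction.exists_enveloping_action {G X : Type*} [Group G] [TopologicalSpace G]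
    [IsTopologicalGroup G] [TopologicalSpace X] (α : TopPartialAction G X) :
    ∃ β : G → Quot α.rel → Quot α.rel,
      (∀ s t x, β s (Quot.mk α.rel (t, x)) = Quot.mk α.rel (s * t, x)) ∧
      Continuous (fun p : G × Quot α.rel => β p.1 p.2) ∧
      (∀ y, β 1 y = y) ∧
      (∀ s t y, β s (β t y) = β (s * t) y) := by
  have hlift : ∀ s : G, ∀ p q : G × X, α.rel p q →
      Quot.mk α.rel (s * p.1, p.2) = Quot.mk α.rel (s * q.1, q.2) := by
    intro s p q h
    apply Quot.sound
    have h1 : (s * p.1)⁻¹ * (s * q.1) = p.1⁻¹ * q.1 := by group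
    have h2 : (s * q.1)⁻¹ * (s * p.1) = q.1⁻¹ * p.1 := by group
    exact ⟨by rw [h1]; exact h.1, by rw [h2]; exact h.2⟩
  refine ⟨fun s => Quot.lift (fun p : G × X => Quot.mk α.rel (s * p.1, p.2)) (hlift s),
    fun s t x => rfl, ?_, ?_, ?_⟩
  · -- continuity
    have hqm : Topology.IsQuotientMap (Prod.map (id : G → G) (Quot.mk α.rel)) := by
      refine IsOpenMap.isQuotientMap ?_ ?_ ?_
      · exact IsOpenMap.id.prodMap α.isOpenMap_mk
      · exact continuous_id.prodMap continuous_quot_mk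
      · exact Function.Surjective.prodMap Function.surjective_id Quot.exists_rep
    rw [hqm.continuous_iff]
    show Continuous fun p : G × (G × X) => Quot.mk α.rel (p.1 * p.2.1, p.2.2)
    exact continuous_quot_mk.comp (by fun_prop)
  · intro y
    induction y using Quot.ind with
    | _ p => show Quot.mk _ (1 * p.1, p.2) = _; rw [one_mul]
  · intro s t y
    induction y using Quot.ind with
    | _ p => show Quot.mk _ (s * (t * p.1), p.2) = Quot.mk _ (s * t * p.1, p.2); rw [mul_assoc]
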